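/- Fix positive constants p_j(t) for j ∈ {1,...,K}, t ∈ {1,...,T}. The function φ(x) = sqrt(∑_{t=1}^T ∑_{j=1}^K p_j(t) / (p_j(t) + ∑_{ℓ=1}^b x_j^ℓ(t))) is convex on the domain of nonnegative vectors x = (x_j^ℓ(t)) for which all denominators are positive. -/

import Mathlib

open Real

lemma comb_pos {A B a c : ℝ} (hA : 0 < A) (hB : 0 < B) (ha : 0 ≤ a) (hc : 0 ≤ c)
    (hac : a + c = 1) : 0 < a * A + c * B := by
  rcases eq_or_lt_of_le ha with h | h
  · have hc1 : c = 1 := by linarith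
    rw [← h, hc1]; simpa using hB
  · have h1 : 0 < a * A := mul_pos h hA
    have h2 : 0 ≤ c * B := mul_nonneg hc hB.le
    linarith

/-- Convexity of `u ↦ u^{-1/2}` expressed directly. -/
lemma inv_sqrt_convex_aux {A B a c : ℝ} (hA : 0 < A) (hB : 0 < B)
    (ha : 0 ≤ a) (hc : 0 ≤ c) (hac : a + c = 1) :
    (Real.sqrt (a * A + c * B))⁻¹ ≤ a * (Real.sqrt A)⁻¹ + c * (Real.sqrt B)⁻¹ := by
  set α := Real.sqrt A with hα'
  set β := Real.sqrt B with hβ'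
  have hα : 0 < α := Real.sqrt_pos.2 hA
  have hβ : 0 < β := Real.sqrt_pos.2 hB
  have hD : 0 < a * A + c * B := comb_pos hA hB ha hc hac
  set γ := Real.sqrt (a * A + c * B) with hγ'
  have hγ : 0 < γ := Real.sqrt_pos.2 hD
  have hγ2 : γ ^ 2 = a * α ^ 2 + c * β ^ 2 := by
    rw [hγ', Real.sq_sqrt hD.le, hα', hβ', Real.sq_sqrt hA.le, Real.sq_sqrt hB.le]
  rw [← one_div, inv_eq_one_div, inv_eq_one_div, mul_one_div, mul_one_div,
    div_add_div _ _ hα.ne' hβ.ne', div_le_div_iff₀ hγ (mul_pos hα hβ)]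
  have key : (1 * (α * β)) ^ 2 ≤ ((a * β + c * α) * γ) ^ 2 := by
    have expand : ((a * β + c * α) * γ) ^ 2 = (a * β + c * α) ^ 2 * (a * α ^ 2 + c * β ^ 2) := by
      rw [mul_pow, hγ2]
    rw [expand]
    have hb1 : 0 ≤ β * ((β - α) ^ 2 * (β + 2 * α)) := by positivity
    have hb2 : 0 ≤ α * ((α - β) ^ 2 * (α + 2 * β)) := by positivity
    have h1 : 0 ≤ a ^ 2 * c * (β * ((β - α) ^ 2 * (β + 2 * α))) :=
      mul_nonneg (mul_nonneg (sq_nonneg a) hc) hb1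
    have h2 : 0 ≤ a * c ^ 2 * (α * ((α - β) ^ 2 * (α + 2 * β))) :=
      mul_nonneg (mul_nonneg ha (sq_nonneg c)) hb2
    have hid : (a * β + c * α) ^ 2 * (a * α ^ 2 + c * β ^ 2)
        - (a + c) ^ 3 * (α * β) ^ 2
        = a ^ 2 * c * (β * ((β - α) ^ 2 * (β + 2 * α)))
          + a * c ^ 2 * (α * ((α - β) ^ 2 * (α + 2 * β))) := by ring
    have hac3 : (a + c) ^ 3 = 1 := by rw [hac]; ring
    nlinarith [h1, h2, hid, hac3]
  have h1 : 0 ≤ 1 * (α * β) := by positivity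
  have h2 : 0 ≤ (a * β + c * α) * γ := by positivity
  nlinarith [key, h1, h2]

/-- Convexity of `s ↦ √(p/(p+s))` along a convex combination. -/
lemma sqrt_div_convex_aux {P A B a c : ℝ} (hP : 0 < P) (hA : 0 < A) (hB : 0 < B)
    (ha : 0 ≤ a) (hc : 0 ≤ c) (hac : a + c = 1) :
    Real.sqrt (P / (a * A + c * B)) ≤
      a * Real.sqrt (P / A) + c * Real.sqrt (P / B) := by
  rw [Real.sqrt_div hP.le, Real.sqrt_div hP.le, Real.sqrt_div hP.le]
  have h := inv_sqrt_convex_aux hA hB ha hc hac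
  have hsP : 0 ≤ Real.sqrt P := Real.sqrt_nonneg P
  calc Real.sqrt P / Real.sqrt (a * A + c * B)
      = Real.sqrt P * (Real.sqrt (a * A + c * B))⁻¹ := by rw [div_eq_mul_inv]
    _ ≤ Real.sqrt P * (a * (Real.sqrt A)⁻¹ + c * (Real.sqrt B)⁻¹) :=
        mul_le_mul_of_nonneg_left h hsP
    _ = a * (Real.sqrt P / Real.sqrt A) + c * (Real.sqrt P / Real.sqrt B) := by ring

theorem phi_convex (K T b : ℕ) (hK : 0 < K) (hT : 0 < T) (hb : 0 < b)
    (p : Fin T → Fin K → ℝ) (hp : ∀ t j, 0 < p t j) :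
    ConvexOn ℝ
      {x : Fin T → Fin K → Fin b → ℝ |
        (∀ t j ℓ, 0 ≤ x t j ℓ) ∧ ∀ t j, 0 < p t j + ∑ ℓ, x t j ℓ}
      (fun x => Real.sqrt (∑ t, ∑ j, p t j / (p t j + ∑ ℓ, x t j ℓ))) := by
  constructor
  · -- convexity of the set
    intro x hx y hy a c ha hc hac
    obtain ⟨hx1, hx2⟩ := hx
    obtain ⟨hy1, hy2⟩ := hy
    constructor
    · intro t j ℓ
      simp only [Pi.add_apply, Pi.smul_apply, smul_eq_mul]
      exact add_nonneg (mul_nonneg ha (hx1 t j ℓ)) (mul_nonneg hc (hy1 t j ℓ))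
    · intro t j
      have hsum : ∑ ℓ, (a • x + c • y) t j ℓ
          = a * ∑ ℓ, x t j ℓ + c * ∑ ℓ, y t j ℓ := by
        simp [Finset.sum_add_distrib, Finset.mul_sum]
      have h1 := hx2 t j
      have h2 := hy2 t j
      have h3 : p t j + (a * ∑ ℓ, x t j ℓ + c * ∑ ℓ, y t j ℓ)
          = a * (p t j + ∑ ℓ, x t j ℓ) + c * (p t j + ∑ ℓ, y t j ℓ) := by
        linear_combination (-(p t j)) * hac
      rw [hsum, h3]
      exact comb_pos h1 h2 ha hc hac
  · intro x hx y hy a c ha hc hac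
    obtain ⟨hx1, hx2⟩ := hx
    obtain ⟨hy1, hy2⟩ := hy
    simp only [smul_eq_mul]
    -- denominators
    set A : Fin T → Fin K → ℝ := fun t j => p t j + ∑ ℓ, x t j ℓ with hA'
    set B : Fin T → Fin K → ℝ := fun t j => p t j + ∑ ℓ, y t j ℓ with hB'
    have hA : ∀ t j, 0 < A t j := hx2
    have hB : ∀ t j, 0 < B t j := hy2
    have hz : ∀ t j, p t j + ∑ ℓ, (a • x + c • y) t j ℓ = a * A t j + c * B t j := by
      intro t j
      have hsum : ∑ ℓ, (a • x + c • y) t j ℓ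
          = a * ∑ ℓ, x t j ℓ + c * ∑ ℓ, y t j ℓ := by
        simp [Finset.sum_add_distrib, Finset.mul_sum]
      rw [hsum]
      simp only [hA', hB']
      linear_combination (-(p t j)) * hac
    -- vectors of square roots
    set u : EuclideanSpace ℝ (Fin T × Fin K) :=
      WithLp.toLp 2 (fun i : Fin T × Fin K => Real.sqrt (p i.1 i.2 / A i.1 i.2)) with hu'
    set v : EuclideanSpace ℝ (Fin T × Fin K) :=
      WithLp.toLp 2 (fun i : Fin T × Fin K => Real.sqrt (p i.1 i.2 / B i.1 i.2)) with hv'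
    have hterm : ∀ i : Fin T × Fin K,
        p i.1 i.2 / (p i.1 i.2 + ∑ ℓ, (a • x + c • y) i.1 i.2 ℓ)
          ≤ ‖(a • u + c • v) i‖ ^ 2 := by
      intro i
      rw [hz i.1 i.2]
      have hD : 0 < a * A i.1 i.2 + c * B i.1 i.2 :=
        comb_pos (hA i.1 i.2) (hB i.1 i.2) ha hc hac
      have hle := sqrt_div_convex_aux (hp i.1 i.2) (hA i.1 i.2) (hB i.1 i.2) ha hc hac
      have hnn : 0 ≤ p i.1 i.2 / (a * A i.1 i.2 + c * B i.1 i.2) :=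
        div_nonneg (hp i.1 i.2).le hD.le
      have havc : (a • u + c • v) i = a * u i + c * v i := by
        simp [Pi.add_apply, Pi.smul_apply, smul_eq_mul]
      rw [havc, Real.norm_eq_abs, sq_abs]
      have hrhs : 0 ≤ a * u i + c * v i := by
        have := Real.sqrt_nonneg (p i.1 i.2 / A i.1 i.2)
        have := Real.sqrt_nonneg (p i.1 i.2 / B i.1 i.2)
        rw [hu', hv', PiLp.toLp_apply, PiLp.toLp_apply]
        positivity
      calc p i.1 i.2 / (a * A i.1 i.2 + c * B i.1 i.2)
          = Real.sqrt (p i.1 i.2 / (a * A i.1 i.2 + c * B i.1 i.2)) ^ 2 :=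
            (Real.sq_sqrt hnn).symm
        _ ≤ (a * u i + c * v i) ^ 2 := by
            apply pow_le_pow_left₀ (Real.sqrt_nonneg _) _ 2
            exact hle
    -- now assemble
    have hsum_eq : ∀ w : Fin T → Fin K → Fin b → ℝ,
        (∑ t, ∑ j, p t j / (p t j + ∑ ℓ, w t j ℓ))
          = ∑ i : Fin T × Fin K, p i.1 i.2 / (p i.1 i.2 + ∑ ℓ, w i.1 i.2 ℓ) := by
      intro w; rw [Fintype.sum_prod_type]
    rw [hsum_eq (a • x + c • y), hsum_eq x, hsum_eq y]
    have step1 : Real.sqrt (∑ i : Fin T × Fin K,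
        p i.1 i.2 / (p i.1 i.2 + ∑ ℓ, (a • x + c • y) i.1 i.2 ℓ))
        ≤ ‖a • u + c • v‖ := by
      rw [EuclideanSpace.norm_eq]
      apply Real.sqrt_le_sqrt
      exact Finset.sum_le_sum fun i _ => hterm i
    have step2 : ‖a • u + c • v‖ ≤ a * ‖u‖ + c * ‖v‖ := by
      calc ‖a • u + c • v‖ ≤ ‖a • u‖ + ‖c • v‖ := norm_add_le _ _
        _ = |a| * ‖u‖ + |c| * ‖v‖ := by rw [norm_smul, norm_smul]; simp [Real.norm_eq_abs]
        _ = a * ‖u‖ + c * ‖v‖ := by rw [abs_of_nonneg ha, abs_of_nonneg hc]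
    have hnormu : ‖u‖ = Real.sqrt (∑ i : Fin T × Fin K, p i.1 i.2 / A i.1 i.2) := by
      rw [EuclideanSpace.norm_eq]
      congr 1
      apply Finset.sum_congr rfl
      intro i _
      rw [Real.norm_eq_abs, sq_abs, hu', PiLp.toLp_apply, Real.sq_sqrt (div_nonneg (hp i.1 i.2).le (hA i.1 i.2).le)]
    have hnormv : ‖v‖ = Real.sqrt (∑ i : Fin T × Fin K, p i.1 i.2 / B i.1 i.2) := by
      rw [EuclideanSpace.norm_eq]
      congr 1
      apply Finset.sum_congr rfl
      intro i _
      rw [Real.norm_eq_abs, sq_abs, hv', PiLp.toLp_apply, Real.sq_sqrt (div_nonneg (hp i.1 i.2).le (hB i.1 i.2).le)]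
    calc Real.sqrt (∑ i : Fin T × Fin K,
          p i.1 i.2 / (p i.1 i.2 + ∑ ℓ, (a • x + c • y) i.1 i.2 ℓ))
        ≤ ‖a • u + c • v‖ := step1
      _ ≤ a * ‖u‖ + c * ‖v‖ := step2
      _ = a * Real.sqrt (∑ i : Fin T × Fin K, p i.1 i.2 / A i.1 i.2)
          + c * Real.sqrt (∑ i : Fin T × Fin K, p i.1 i.2 / B i.1 i.2) := by
          rw [hnormu, hnormv]
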